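/- Let U and B be arbitrary types of unary and binary operator labels, and let Expr be the inductive type of expression trees with constructors leaf : ℕ → Expr, un : U → Expr → Expr, and bin : B → Expr → Expr → Expr, with symbol type S = ℕ ⊕ U ⊕ B and postorder serialization post : Expr → List S defined by post(leaf n) = [inl n], post(un u t) = post(t) ++ [symbol of u], and post(bin b t₁ t₂) = post(t₁) ++ post(t₂) ++ [symbol of b]. Let enc : S → ℕ be an injective function with all values positive, and let p_i denote the (i+1)-st prime. Define the certificate Cert(t) = ∏_{i<n} p_i^{enc(s_i)}, where [s_0, …, s_{n-1}] = post(t). Then Cert is injective: two expression trees with the same certificate are equal. -/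

import Mathlib

/-- Expression trees with natural-number leaves, unary operators drawn from `U`,
and binary operators drawn from `B`. -/
inductive Expr (U B : Type) where
  | leaf : ℕ → Expr U B
  | un : U → Expr U B → Expr U B
  | bin : B → Expr U B → Expr U B → Expr U B

/-- Postorder serialization of an expression tree into symbols `ℕ ⊕ U ⊕ B`. -/
def post {U B : Type} : Expr U B → List (ℕ ⊕ U ⊕ B)
  | .leaf n => [Sum.inl n]
  | .un u t => post t ++ [Sum.inr (Sum.inl u)]
  | .bin b t₁ t₂ => post t₁ ++ post t₂ ++ [Sum.inr (Sum.inr b)]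

/-- The positional prime-power encoding of a list `[s₀, …, s_{n-1}]`:
`∏_{i<n} pᵢ^{enc sᵢ}`, where `pᵢ` is the (i+1)-st prime (`p₀ = 2`, `p₁ = 3`, …). -/
noncomputable def posCode {S : Type} (enc : S → ℕ) (l : List S) : ℕ :=
  (l.zipIdx.map (fun p => (Nat.nth Nat.Prime p.2) ^ enc p.1)).prod

/-- The Gödel-style certificate of an expression tree: the positional prime-power
encoding of its postorder symbol list. -/
noncomputable def Cert {U B : Type} (enc : (ℕ ⊕ U ⊕ B) → ℕ) (t : Expr U B) : ℕ :=
  posCode enc (post t)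

/-! ### posCode is injective -/

noncomputable def posCodeFrom {S : Type} (enc : S → ℕ) : ℕ → List S → ℕ
  | _, [] => 1
  | k, s :: l => (Nat.nth Nat.Prime k) ^ enc s * posCodeFrom enc (k+1) l

lemma posCode_eq_from {S : Type} (enc : S → ℕ) (l : List S) :
    posCode enc l = posCodeFrom enc 0 l := by
  rw [posCode]
  generalize 0 = k
  induction l generalizing k with
  | nil => rfl
  | cons s l ih => simp [List.zipIdx_cons, posCodeFrom, ih]

lemma posCodeFrom_pos {S : Type} (enc : S → ℕ) (k : ℕ) (l : List S) :
    0 < posCodeFrom enc k l := by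
  induction l generalizing k with
  | nil => exact one_pos
  | cons s l ih =>
    exact mul_pos (pow_pos (Nat.prime_nth_prime k).pos _) (ih (k+1))

lemma nth_prime_inj : Function.Injective (Nat.nth Nat.Prime) :=
  Nat.nth_injective Nat.infinite_setOf_prime

lemma posCodeFrom_fact_lt {S : Type} (enc : S → ℕ) (k : ℕ) (l : List S) (i : ℕ) (hi : i < k) :
    (posCodeFrom enc k l).factorization (Nat.nth Nat.Prime i) = 0 := by
  induction l generalizing k with
  | nil => simp [posCodeFrom]
  | cons s l ih =>
    rw [posCodeFrom, Nat.factorization_mul (pow_pos (Nat.prime_nth_prime _).pos _).ne' (posCodeFrom_pos enc _ l).ne',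
      (Nat.prime_nth_prime k).factorization_pow]
    simp only [Finsupp.coe_add, Pi.add_apply]
    rw [Finsupp.single_apply, if_neg (fun h => absurd (nth_prime_inj h).symm hi.ne),
      ih (k+1) (hi.trans (Nat.lt_succ_self k))]

lemma posCodeFrom_fact {S : Type} (enc : S → ℕ) (k : ℕ) (l : List S) (j : ℕ) :
    (posCodeFrom enc k l).factorization (Nat.nth Nat.Prime (k + j)) =
      ((l[j]?).map enc).getD 0 := by
  induction l generalizing k j with
  | nil => simp [posCodeFrom]
  | cons s l ih =>
    rw [posCodeFrom, Nat.factorization_mul (pow_pos (Nat.prime_nth_prime _).pos _).ne' (posCodeFrom_pos enc _ l).ne',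
      (Nat.prime_nth_prime k).factorization_pow]
    simp only [Finsupp.coe_add, Pi.add_apply]
    cases j with
    | zero =>
      rw [Nat.add_zero, Finsupp.single_apply, if_pos rfl,
        posCodeFrom_fact_lt enc (k+1) l k (Nat.lt_succ_self k)]
      simp
    | succ j =>
      rw [Finsupp.single_apply, if_neg (fun h => by have := nth_prime_inj h; omega), zero_add]
      have : k + (j + 1) = (k + 1) + j := by omega
      rw [this, ih (k+1) j]
      simp

lemma posCode_fact {S : Type} (enc : S → ℕ) (l : List S) (j : ℕ) :
    (posCode enc l).factorization (Nat.nth Nat.Prime j) = ((l[j]?).map enc).getD 0 := by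
  rw [posCode_eq_from]
  simpa using posCodeFrom_fact enc 0 l j

lemma posCode_injective {S : Type} (enc : S → ℕ) (henc : Function.Injective enc)
    (hpos : ∀ s, 0 < enc s) : Function.Injective (posCode enc) := by
  intro l₁ l₂ h
  have key : ∀ j : ℕ, ((l₁[j]?).map enc).getD 0 = ((l₂[j]?).map enc).getD 0 := by
    intro j
    rw [← posCode_fact enc l₁ j, ← posCode_fact enc l₂ j, h]
  refine List.ext_getElem? fun j => ?_
  have := key j
  cases h₁ : l₁[j]? with
  | none =>
    cases h₂ : l₂[j]? with
    | none => rfl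
    | some s => rw [h₁, h₂] at this; simp at this; exact absurd this.symm (hpos s).ne'
  | some s =>
    cases h₂ : l₂[j]? with
    | none => rw [h₁, h₂] at this; simp at this; exact absurd this (hpos s).ne'
    | some s' =>
      rw [h₁, h₂] at this; simp at this
      exact congrArg _ (henc this)

/-! ### post is injective -/

def wS {U B : Type} : (ℕ ⊕ U ⊕ B) → ℤ :=
  Sum.elim (fun _ => 1) (Sum.elim (fun _ => 0) (fun _ => -1))

def wsum {U B : Type} (l : List (ℕ ⊕ U ⊕ B)) : ℤ := (l.map wS).sum

@[simp] lemma wsum_nil {U B : Type} : wsum ([] : List (ℕ ⊕ U ⊕ B)) = 0 := rfl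

@[simp] lemma wsum_append {U B : Type} (l₁ l₂ : List (ℕ ⊕ U ⊕ B)) :
    wsum (l₁ ++ l₂) = wsum l₁ + wsum l₂ := by simp [wsum]

@[simp] lemma wsum_leaf {U B : Type} (n : ℕ) :
    wsum ([Sum.inl n] : List (ℕ ⊕ U ⊕ B)) = 1 := by simp [wsum, wS]

@[simp] lemma wsum_un {U B : Type} (u : U) :
    wsum ([Sum.inr (Sum.inl u)] : List (ℕ ⊕ U ⊕ B)) = 0 := by simp [wsum, wS]

@[simp] lemma wsum_bin {U B : Type} (b : B) :
    wsum ([Sum.inr (Sum.inr b)] : List (ℕ ⊕ U ⊕ B)) = -1 := by simp [wsum, wS]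

lemma wsum_post {U B : Type} (t : Expr U B) : wsum (post t) = 1 := by
  induction t with
  | leaf n => simp [post]
  | un u t ih => simp [post, ih]
  | bin b t₁ t₂ ih₁ ih₂ => simp [post, ih₁, ih₂]

lemma suffix_append_cases {S : Type} {l a b : List S} (h : l <:+ a ++ b) :
    l <:+ b ∨ ∃ l', l' <:+ a ∧ l = l' ++ b := by
  rcases Nat.le_total l.length b.length with hl | hl
  · exact Or.inl (List.suffix_of_suffix_length_le h (List.suffix_append a b) hl)
  · have hb : b <:+ l := List.suffix_of_suffix_length_le (List.suffix_append a b) h hl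
    obtain ⟨l', rfl⟩ := hb
    obtain ⟨u, hu⟩ := h
    rw [← List.append_assoc] at hu
    exact Or.inr ⟨l', ⟨u, List.append_cancel_right hu⟩, rfl⟩

lemma wsum_proper_suffix {U B : Type} (t : Expr U B) :
    ∀ l, l <:+ post t → l ≠ post t → wsum l ≤ 0 := by
  induction t with
  | leaf n =>
    intro l hl hne
    rcases List.suffix_cons_iff.1 hl with h | h
    · exact absurd h hne
    · simp only [List.suffix_nil] at h; simp [h]
  | un u t ih =>
    intro l hl hne
    rcases suffix_append_cases hl with h | ⟨l', hl', rfl⟩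
    · rcases List.suffix_cons_iff.1 h with h | h
      · subst h; simp
      · simp only [List.suffix_nil] at h; simp [h]
    · have hl'ne : l' ≠ post t := fun h => hne (by rw [h, post])
      have := ih l' hl' hl'ne
      simp only [wsum_append, wsum_un]
      omega
  | bin b t₁ t₂ ih₁ ih₂ =>
    intro l hl hne
    rw [post, List.append_assoc] at hl hne
    rcases suffix_append_cases hl with h | ⟨l', hl', rfl⟩
    · rcases suffix_append_cases h with h2 | ⟨l₂, hl₂, rfl⟩
      · rcases List.suffix_cons_iff.1 h2 with h3 | h3
        · subst h3; simp
        · simp only [List.suffix_nil] at h3; simp [h3]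
      · have hle : wsum l₂ ≤ 1 := by
          by_cases hc : l₂ = post t₂
          · rw [hc, wsum_post]
          · exact (ih₂ l₂ hl₂ hc).trans (by norm_num)
        simp only [wsum_append, wsum_bin]
        omega
    · have hl'ne : l' ≠ post t₁ := by rintro rfl; exact hne rfl
      have h1 := ih₁ l' hl' hl'ne
      simp only [wsum_append, wsum_bin, wsum_post]
      omega

lemma post_suffix_code {U B : Type} {s t : Expr U B} (h : post s <:+ post t) :
    post s = post t := by
  by_contra hne
  have := wsum_proper_suffix t (post s) h hne
  rw [wsum_post] at this
  omega

lemma post_injective {U B : Type} : Function.Injective (post (U := U) (B := B)) := by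
  intro t₁ t₂ h
  induction t₁ generalizing t₂ with
  | leaf n =>
    cases t₂ with
    | leaf m => simp [post] at h; rw [h]
    | un u t =>
      rw [post, post] at h
      have := congrArg List.reverse h; simp at this
    | bin b s₁ s₂ =>
      rw [post, post, List.append_assoc] at h
      have := congrArg List.reverse h; simp at this
  | un u t ih =>
    cases t₂ with
    | leaf m =>
      rw [post, post] at h
      have := congrArg List.reverse h; simp at this
    | un u' t' =>
      rw [post, post] at h
      have h2 := congrArg List.reverse h
      simp only [List.reverse_append, List.reverse_singleton, List.singleton_append,
        List.cons.injEq] at h2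
      obtain ⟨he, hr⟩ := h2
      obtain rfl : u = u' := by simpa using he
      have hpt : post t = post t' := by
        have := congrArg List.reverse hr; simpa using this
      rw [ih hpt]
    | bin b s₁ s₂ =>
      rw [post, post, List.append_assoc] at h
      have h2 := congrArg List.reverse h
      simp only [List.reverse_append, List.reverse_singleton, List.singleton_append,
        List.cons.injEq] at h2
      injection h2 with he _
      simp at he
  | bin b s₁ s₂ ih₁ ih₂ =>
    cases t₂ with
    | leaf m =>
      rw [post, post, List.append_assoc] at h
      have := congrArg List.reverse h; simp at this
    | un u' t' =>
      rw [post, post, List.append_assoc] at h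
      have h2 := congrArg List.reverse h
      simp only [List.reverse_append, List.reverse_singleton, List.singleton_append,
        List.cons.injEq] at h2
      injection h2 with he _
      simp at he
    | bin b' s₁' s₂' =>
      rw [post, post, List.append_assoc, List.append_assoc] at h
      have h2 := congrArg List.reverse h
      simp only [List.reverse_append, List.reverse_singleton, List.singleton_append,
        List.cons.injEq] at h2
      injection h2 with he hr
      obtain rfl : b = b' := by simpa using he
      have hmid : post s₁ ++ post s₂ = post s₁' ++ post s₂' := by
        have := congrArg List.reverse hr
        simpa [List.append_assoc] using this
      have h22 : post s₂ = post s₂' := by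
        have hsuf₁ : post s₂ <:+ post s₁' ++ post s₂' :=
          hmid ▸ List.suffix_append (post s₁) (post s₂)
        have hsuf₂ : post s₂' <:+ post s₁' ++ post s₂' := List.suffix_append _ _
        rcases List.suffix_or_suffix_of_suffix hsuf₁ hsuf₂ with h3 | h3
        · exact post_suffix_code h3
        · exact (post_suffix_code h3).symm
      have h11 : post s₁ = post s₁' := by
        rw [h22] at hmid
        exact List.append_cancel_right hmid
      rw [ih₁ h11, ih₂ h22]

theorem Cert_injective {U B : Type} (enc : (ℕ ⊕ U ⊕ B) → ℕ)
    (henc : Function.Injective enc) (hpos : ∀ s, 0 < enc s)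
    (t₁ t₂ : Expr U B) (h : Cert enc t₁ = Cert enc t₂) : t₁ = t₂ :=
  post_injective (posCode_injective enc henc hpos h)
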